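/- Let F:[0,1]²→[0,1] be a continuous operation that is nondecreasing in each variable, and let f be a convex fuzzy truth value. Then for all fuzzy truth values g and h, f ⊙_F (g ⊔ h) = (f ⊙_F g) ⊔ (f ⊙_F h). -/
import Mathlib


open Set

/-- The extension of a binary operation `G` on `[0,1]` to fuzzy truth values:
`(f ⊙_G g)(z) = sup { min (f x) (g y) | x, y ∈ [0,1], G x y = z }` (with `sSup ∅ = 0` in `ℝ`). -/
noncomputable def extOp (G : ℝ → ℝ → ℝ) (f g : ℝ → ℝ) : ℝ → ℝ := fun z =>
  sSup {r : ℝ | ∃ x ∈ Icc (0:ℝ) 1, ∃ y ∈ Icc (0:ℝ) 1, G x y = z ∧ r = min (f x) (g y)}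

/-- A fuzzy truth value: a map of `[0,1]` into itself. -/
def IsFTV (f : ℝ → ℝ) : Prop := ∀ x ∈ Icc (0:ℝ) 1, f x ∈ Icc (0:ℝ) 1

/-- Convexity of a fuzzy truth value. -/
def ConvexFTV (f : ℝ → ℝ) : Prop :=
  ∀ x y z : ℝ, 0 ≤ x → x ≤ y → y ≤ z → z ≤ 1 → min (f x) (f z) ≤ f y

/-- `F` maps `[0,1]²` into `[0,1]`. -/
def MapsI (F : ℝ → ℝ → ℝ) : Prop :=
  ∀ x ∈ Icc (0:ℝ) 1, ∀ y ∈ Icc (0:ℝ) 1, F x y ∈ Icc (0:ℝ) 1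

/-- `F` is nondecreasing in each variable on `[0,1]²`. -/
def MonoI (F : ℝ → ℝ → ℝ) : Prop :=
  ∀ x₁ x₂ y₁ y₂ : ℝ, x₁ ∈ Icc (0:ℝ) 1 → x₂ ∈ Icc (0:ℝ) 1 → y₁ ∈ Icc (0:ℝ) 1 →
    y₂ ∈ Icc (0:ℝ) 1 → x₁ ≤ x₂ → y₁ ≤ y₂ → F x₁ y₁ ≤ F x₂ y₂

/-- `F` is continuous on `[0,1]²`. -/
def ContI (F : ℝ → ℝ → ℝ) : Prop :=
  ContinuousOn (fun p : ℝ × ℝ => F p.1 p.2) (Icc (0:ℝ) 1 ×ˢ Icc (0:ℝ) 1)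

/-- `F` is commutative on `[0,1]²`. -/
def CommI (F : ℝ → ℝ → ℝ) : Prop := ∀ x ∈ Icc (0:ℝ) 1, ∀ y ∈ Icc (0:ℝ) 1, F x y = F y x

/-- `F` is associative on `[0,1]`. -/
def AssocI (F : ℝ → ℝ → ℝ) : Prop :=
  ∀ x ∈ Icc (0:ℝ) 1, ∀ y ∈ Icc (0:ℝ) 1, ∀ z ∈ Icc (0:ℝ) 1, F (F x y) z = F x (F y z)

lemma min_sSup_le_right {B : Set ℝ} {p c : ℝ} (hB : B.Nonempty)
    (H : ∀ q ∈ B, min p q ≤ c) : min p (sSup B) ≤ c := by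
  by_contra hc
  push_neg at hc
  obtain ⟨q, hq, hcq⟩ := exists_lt_of_lt_csSup hB (hc.trans_le (min_le_right _ _))
  exact absurd (H q hq) (not_le.mpr (lt_min (hc.trans_le (min_le_left _ _)) hcq))

lemma min_sSup_sSup_le {A B : Set ℝ} {c : ℝ} (hA : A.Nonempty) (hB : B.Nonempty)
    (H : ∀ p ∈ A, ∀ q ∈ B, min p q ≤ c) : min (sSup A) (sSup B) ≤ c := by
  by_contra hc
  push_neg at hc
  obtain ⟨p, hp, hcp⟩ := exists_lt_of_lt_csSup hA (hc.trans_le (min_le_left _ _))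
  obtain ⟨q, hq, hcq⟩ := exists_lt_of_lt_csSup hB (hc.trans_le (min_le_right _ _))
  exact absurd (H p hp q hq) (not_le.mpr (lt_min hcp hcq))

lemma extSet_bdd {G : ℝ → ℝ → ℝ} {f g : ℝ → ℝ} (hf : IsFTV f) {z : ℝ} :
    BddAbove {r : ℝ | ∃ x ∈ Icc (0:ℝ) 1, ∃ y ∈ Icc (0:ℝ) 1, G x y = z ∧ r = min (f x) (g y)} := by
  refine ⟨1, ?_⟩
  rintro r ⟨x, hx, y, hy, -, rfl⟩
  exact le_trans (min_le_left _ _) (hf x hx).2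

lemma extSet_nonneg {G : ℝ → ℝ → ℝ} {f g : ℝ → ℝ} (hf : IsFTV f) (hg : IsFTV g) {z : ℝ} :
    ∀ r ∈ {r : ℝ | ∃ x ∈ Icc (0:ℝ) 1, ∃ y ∈ Icc (0:ℝ) 1, G x y = z ∧ r = min (f x) (g y)},
      0 ≤ r := by
  rintro r ⟨x, hx, y, hy, -, rfl⟩
  exact le_min (hf x hx).1 (hg y hy).1

lemma extOp_nonneg {G : ℝ → ℝ → ℝ} {f g : ℝ → ℝ} (hf : IsFTV f) (hg : IsFTV g) (z : ℝ) :
    0 ≤ extOp G f g z :=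
  Real.sSup_nonneg (extSet_nonneg hf hg)

lemma extOp_isFTV {G : ℝ → ℝ → ℝ} {f g : ℝ → ℝ} (hf : IsFTV f) (hg : IsFTV g) :
    IsFTV (extOp G f g) := by
  intro z _
  refine ⟨extOp_nonneg hf hg z, Real.sSup_le ?_ zero_le_one⟩
  rintro r ⟨x, hx, y, hy, -, rfl⟩
  exact le_trans (min_le_left _ _) (hf x hx).2

lemma exists_mid {F : ℝ → ℝ → ℝ} {f : ℝ → ℝ} (hFcont : ContI F) (hfconvex : ConvexFTV f)
    {x x' c z : ℝ} (hx : x ∈ Icc (0:ℝ) 1) (hx' : x' ∈ Icc (0:ℝ) 1) (hc : c ∈ Icc (0:ℝ) 1)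
    (h1 : F x c ≤ z) (h2 : z ≤ F x' c) :
    ∃ X ∈ Icc (0:ℝ) 1, F X c = z ∧ min (f x) (f x') ≤ f X := by
  have hφ : ContinuousOn (fun t => F t c) (Icc (0:ℝ) 1) := by
    have hmaps : MapsTo (fun t : ℝ => (t, c)) (Icc (0:ℝ) 1) (Icc (0:ℝ) 1 ×ˢ Icc (0:ℝ) 1) :=
      fun t ht => mk_mem_prod ht hc
    exact hFcont.comp ((continuous_id.prodMk continuous_const).continuousOn) hmaps
  rcases le_total x x' with hxx | hxx
  · obtain ⟨X, hX, hFX⟩ :=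
      intermediate_value_Icc hxx (hφ.mono (Icc_subset_Icc hx.1 hx'.2)) ⟨h1, h2⟩
    exact ⟨X, ⟨le_trans hx.1 hX.1, le_trans hX.2 hx'.2⟩, hFX,
      hfconvex x X x' hx.1 hX.1 hX.2 hx'.2⟩
  · obtain ⟨X, hX, hFX⟩ :=
      intermediate_value_Icc' hxx (hφ.mono (Icc_subset_Icc hx'.1 hx.2)) ⟨h1, h2⟩
    refine ⟨X, ⟨le_trans hx'.1 hX.1, le_trans hX.2 hx.2⟩, hFX, ?_⟩
    rw [min_comm]
    exact hfconvex x' X x hx'.1 hX.1 hX.2 hx.2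
/-- Distributivity of an extended continuous nondecreasing operation over the
extended maximum `⊔`, for a convex first argument. -/
theorem extOp_distrib_sup (F : ℝ → ℝ → ℝ)
    (hFmap : MapsI F) (hFcont : ContI F) (hFmono : MonoI F)
    (f : ℝ → ℝ) (hf : IsFTV f) (hfconvex : ConvexFTV f)
    (g h : ℝ → ℝ) (hg : IsFTV g) (hh : IsFTV h) :
    ∀ z ∈ Icc (0:ℝ) 1,
      extOp F f (extOp max g h) z = extOp max (extOp F f g) (extOp F f h) z := by
  intro z hz
  have hGH : IsFTV (extOp max g h) := extOp_isFTV hg hh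
  have hFg : IsFTV (extOp F f g) := extOp_isFTV hf hg
  have hFh : IsFTV (extOp F f h) := extOp_isFTV hf hh
  apply le_antisymm
  · -- LHS ≤ RHS
    refine Real.sSup_le ?_ (extOp_nonneg hFg hFh z)
    rintro r ⟨x, hx, y, hy, hxy, rfl⟩
    have hBne : {r : ℝ | ∃ u ∈ Icc (0:ℝ) 1, ∃ v ∈ Icc (0:ℝ) 1,
        max u v = y ∧ r = min (g u) (h v)}.Nonempty :=
      ⟨min (g y) (h y), y, hy, y, hy, max_self y, rfl⟩
    refine min_sSup_le_right hBne ?_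
    rintro q ⟨u, hu, v, hv, huv, rfl⟩
    have hmax : max (F x u) (F x v) = z := by
      rcases max_cases u v with ⟨he, hvu⟩ | ⟨he, huv'⟩
      · have huy : u = y := he.symm.trans huv
        rw [max_eq_left (hFmono x x v u hx hx hv hu le_rfl hvu), huy, hxy]
      · have hvy : v = y := he.symm.trans huv
        rw [max_eq_right (hFmono x x u v hx hx hu hv le_rfl huv'.le), hvy, hxy]
    refine le_trans ?_ (le_csSup (extSet_bdd hFg)
      ⟨F x u, hFmap x hx u hu, F x v, hFmap x hx v hv, hmax, rfl⟩)
    refine le_min ?_ ?_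
    · exact le_trans (le_min (min_le_left _ _)
        (le_trans (min_le_right _ _) (min_le_left _ _)))
        (le_csSup (extSet_bdd hf) ⟨x, hx, u, hu, rfl, rfl⟩)
    · exact le_trans (le_min (min_le_left _ _)
        (le_trans (min_le_right _ _) (min_le_right _ _)))
        (le_csSup (extSet_bdd hf) ⟨x, hx, v, hv, rfl, rfl⟩)
  · -- RHS ≤ LHS
    refine Real.sSup_le ?_ (extOp_nonneg hf hGH z)
    rintro r ⟨a, ha, b, hb, hab, rfl⟩
    rcases eq_empty_or_nonempty {r : ℝ | ∃ x ∈ Icc (0:ℝ) 1, ∃ y ∈ Icc (0:ℝ) 1,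
        F x y = a ∧ r = min (f x) (g y)} with hAe | hAne
    · have hA0 : extOp F f g a = 0 := by
        show sSup {r : ℝ | ∃ x ∈ Icc (0:ℝ) 1, ∃ y ∈ Icc (0:ℝ) 1,
          F x y = a ∧ r = min (f x) (g y)} = 0
        rw [hAe, Real.sSup_empty]
      rw [hA0]
      exact le_trans (min_le_left _ _) (extOp_nonneg hf hGH z)
    rcases eq_empty_or_nonempty {r : ℝ | ∃ x ∈ Icc (0:ℝ) 1, ∃ y ∈ Icc (0:ℝ) 1,
        F x y = b ∧ r = min (f x) (h y)} with hBe | hBne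
    · have hB0 : extOp F f h b = 0 := by
        show sSup {r : ℝ | ∃ x ∈ Icc (0:ℝ) 1, ∃ y ∈ Icc (0:ℝ) 1,
          F x y = b ∧ r = min (f x) (h y)} = 0
        rw [hBe, Real.sSup_empty]
      rw [hB0]
      exact le_trans (min_le_right _ _) (extOp_nonneg hf hGH z)
    refine min_sSup_sSup_le hAne hBne ?_
    rintro p ⟨x, hx, u, hu, hxu, rfl⟩ q ⟨x', hx', v, hv, hx'v, rfl⟩
    have hY : max u v ∈ Icc (0:ℝ) 1 := ⟨le_trans hu.1 (le_max_left _ _), max_le hu.2 hv.2⟩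
    obtain ⟨X, hX, hFX, hfX⟩ : ∃ X ∈ Icc (0:ℝ) 1, F X (max u v) = z ∧
        min (f x) (f x') ≤ f X := by
      rcases max_cases a b with ⟨he, hba⟩ | ⟨he, hab'⟩
      · -- a = z, b ≤ a
        have haz : a = z := he.symm.trans hab
        rcases le_total v u with hvu | huv
        · refine ⟨x, hx, ?_, min_le_left _ _⟩
          rw [max_eq_left hvu, hxu, haz]
        · have h1 : F x' v ≤ z := by rw [hx'v]; exact haz ▸ hba
          have h2 : z ≤ F x v := by
            calc z = F x u := by rw [hxu, haz]
            _ ≤ F x v := hFmono x x u v hx hx hu hv le_rfl huv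
          obtain ⟨X, hX, hFX, hmin⟩ := exists_mid hFcont hfconvex hx' hx hv h1 h2
          exact ⟨X, hX, by rwa [max_eq_right huv], by rwa [min_comm]⟩
      · -- b = z, a < b
        have hbz : b = z := he.symm.trans hab
        rcases le_total u v with huv | hvu
        · refine ⟨x', hx', ?_, min_le_right _ _⟩
          rw [max_eq_right huv, hx'v, hbz]
        · have h1 : F x u ≤ z := by rw [hxu]; exact hbz ▸ hab'.le
          have h2 : z ≤ F x' u := by
            calc z = F x' v := by rw [hx'v, hbz]
            _ ≤ F x' u := hFmono x' x' v u hx' hx' hv hu le_rfl hvu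
          obtain ⟨X, hX, hFX, hmin⟩ := exists_mid hFcont hfconvex hx hx' hu h1 h2
          exact ⟨X, hX, by rwa [max_eq_left hvu], hmin⟩
    have hGHmem : min (g u) (h v) ≤ extOp max g h (max u v) :=
      le_csSup (extSet_bdd hg) ⟨u, hu, v, hv, rfl, rfl⟩
    refine le_trans ?_ (le_csSup (extSet_bdd hf) ⟨X, hX, max u v, hY, hFX, rfl⟩)
    refine le_min ?_ ?_
    · exact le_trans (min_le_min (min_le_left _ _) (min_le_left _ _)) hfX
    · exact le_trans (min_le_min (min_le_right _ _) (min_le_right _ _)) hGHmem
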